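/- Let G ∈ QT_1 and let G' = G[V(G) \ {x, w, v, z}] be the subgraph of G induced by all vertices except x, w, v, z. If γ_t(G') ≤ a(G') + 1, then γ_t(G) ≤ a(G) + 1. -/

import Mathlib

open SimpleGraph

/-- The total domination number of a graph. -/
noncomputable def totalDominationNumber {V : Type*} (G : SimpleGraph V) : ℕ :=
  sInf {k | ∃ D : Finset V, (∀ v : V, ∃ u ∈ D, G.Adj v u) ∧ D.card = k}

/-- The annihilation number of a graph. -/
noncomputable def annihilationNumber {V : Type*} (G : SimpleGraph V) : ℕ :=
  sSup {k | ∃ S : Finset V, S.card = k ∧ ∑ v ∈ S, (G.neighborSet v).ncard ≤ G.edgeSet.ncard}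

/-- Statuses used in the definition of the family `Γ`. -/
inductive Status
  | A | B | C

/-- A graph whose vertices are labeled with statuses. -/
structure LGraph where
  V : Type
  G : SimpleGraph V
  sta : V → Status

/-- Status-preserving isomorphism of labeled graphs. -/
def LIso (L₁ L₂ : LGraph) : Prop :=
  ∃ e : L₁.G ≃g L₂.G, ∀ v, L₂.sta (e v) = L₁.sta v

/-- The base labeled tree `T₀`: a path `P₆` whose two leaves have status `C`,
whose two support vertices have status `A`, and whose middle vertices have status `B`. -/
def baseT0 : LGraph where
  V := Fin 6
  G := SimpleGraph.fromRel (fun i j => (i : ℕ) + 1 = (j : ℕ))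
  sta := ![Status.C, Status.A, Status.B, Status.B, Status.A, Status.C]

/-- Operation `o₁`: to a labeled graph `L` with chosen vertex `y`, attach a new path
`x–w–v–z` (the vertices `Sum.inr 0, 1, 2, 3`) together with the edge `x y`, statuses
`sta x = sta w = B`, `sta v = A`, `sta z = C`. -/
def o1Ext (L : LGraph) (y : L.V) : LGraph where
  V := L.V ⊕ Fin 4
  G := (L.G.map Function.Embedding.inl) ⊔
    SimpleGraph.fromEdgeSet
      {s(Sum.inl y, Sum.inr 0), s(Sum.inr 0, Sum.inr 1),
       s(Sum.inr 1, Sum.inr 2), s(Sum.inr 2, Sum.inr 3)}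
  sta := Sum.elim L.sta ![Status.B, Status.B, Status.A, Status.C]

/-- Operation `o₂`: to a labeled graph `L` with chosen vertex `y`, attach a new path
`x–w–v` (the vertices `Sum.inr 0, 1, 2`) together with the edge `x y`, statuses
`sta x = B`, `sta w = A`, `sta v = C`. -/
def o2Ext (L : LGraph) (y : L.V) : LGraph where
  V := L.V ⊕ Fin 3
  G := (L.G.map Function.Embedding.inl) ⊔
    SimpleGraph.fromEdgeSet
      {s(Sum.inl y, Sum.inr 0), s(Sum.inr 0, Sum.inr 1), s(Sum.inr 1, Sum.inr 2)}
  sta := Sum.elim L.sta ![Status.B, Status.A, Status.C]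

/-- The family `Γ` of labeled trees (closed under status-preserving isomorphism):
it contains `T₀` and is closed under operation `o₁` (applied at a leaf of status `C`)
and operation `o₂` (applied at a vertex of status `B`). -/
inductive InGamma : LGraph → Prop
  | base (L : LGraph) : LIso baseT0 L → InGamma L
  | op1 (L : LGraph) (y : L.V) (hL : InGamma L) (hsta : L.sta y = Status.C)
      (hleaf : (L.G.neighborSet y).ncard = 1) (L' : LGraph) (h : LIso (o1Ext L y) L') :
      InGamma L'
  | op2 (L : LGraph) (y : L.V) (hL : InGamma L) (hsta : L.sta y = Status.B)
      (L' : LGraph) (h : LIso (o2Ext L y) L') : InGamma L'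

/-- Add one new vertex `h = Sum.inr ()` to `G` and join it to every vertex in `S`. -/
def attachVertex {V : Type} (G : SimpleGraph V) (S : Set V) : SimpleGraph (V ⊕ Unit) :=
  (G.map Function.Embedding.inl) ⊔
    SimpleGraph.fromEdgeSet {e | ∃ u ∈ S, e = s(Sum.inl u, Sum.inr ())}

section Aux

/-- Vertex types in the family `Γ` are finite. -/
lemma InGamma.finiteV {L : LGraph} (h : InGamma L) : Finite L.V := by
  induction h with
  | base L h =>
    obtain ⟨e, -⟩ := h
    exact Finite.of_equiv (Fin 6) e.toEquiv
  | op1 L y hL hsta hleaf L' h ih =>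
    obtain ⟨e, -⟩ := h
    haveI := ih
    exact Finite.of_equiv (L.V ⊕ Fin 4) e.toEquiv
  | op2 L y hL hsta L' h ih =>
    obtain ⟨e, -⟩ := h
    haveI := ih
    exact Finite.of_equiv (L.V ⊕ Fin 3) e.toEquiv

variable (T : LGraph) (y : T.V) (N : Finset T.V)

abbrev Wt (T : LGraph) := (T.V ⊕ Fin 4) ⊕ Unit

def GG : SimpleGraph (Wt T) := attachVertex (o1Ext T y).G (Sum.inl '' (N : Set T.V))

def emb (a : T.V) : Wt T := Sum.inl (Sum.inl a)
def vx : Wt T := Sum.inl (Sum.inr 0)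
def vw : Wt T := Sum.inl (Sum.inr 1)
def vv : Wt T := Sum.inl (Sum.inr 2)
def vz : Wt T := Sum.inl (Sum.inr 3)
def vh : Wt T := Sum.inr ()

def sSet (T : LGraph) : Set (Wt T) :=
  {u | u ∉ ({Sum.inl (Sum.inr 0), Sum.inl (Sum.inr 1), Sum.inl (Sum.inr 2),
    Sum.inl (Sum.inr 3)} : Set (Wt T))}

lemma adjGG (p q : Wt T) : (GG T y N).Adj p q ↔
    (∃ a b, T.G.Adj a b ∧ p = emb T a ∧ q = emb T b)
    ∨ ((p = emb T y ∧ q = vx T) ∨ (q = emb T y ∧ p = vx T))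
    ∨ ((p = vx T ∧ q = vw T) ∨ (q = vx T ∧ p = vw T))
    ∨ ((p = vw T ∧ q = vv T) ∨ (q = vw T ∧ p = vv T))
    ∨ ((p = vv T ∧ q = vz T) ∨ (q = vv T ∧ p = vz T))
    ∨ (∃ n ∈ N, (p = emb T n ∧ q = vh T) ∨ (q = emb T n ∧ p = vh T)) := by
  simp only [GG, attachVertex, o1Ext, SimpleGraph.sup_adj, SimpleGraph.map_adj,
    SimpleGraph.fromEdgeSet_adj, Set.mem_insert_iff, Set.mem_singleton_iff, Sym2.eq_iff,
    Set.mem_setOf_eq, Set.mem_image, Finset.mem_coe, Function.Embedding.inl_apply,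
    emb, vx, vw, vv, vz, vh]
  aesop

lemma emb_mem_sSet (a : T.V) : emb T a ∈ sSet T := by
  simp [sSet, emb]

lemma vh_mem_sSet : vh T ∈ sSet T := by
  simp [sSet, vh]

lemma vx_not_mem_sSet : vx T ∉ sSet T := by simp [sSet, vx]
lemma vw_not_mem_sSet : vw T ∉ sSet T := by simp [sSet, vw]
lemma vv_not_mem_sSet : vv T ∉ sSet T := by simp [sSet, vv]
lemma vz_not_mem_sSet : vz T ∉ sSet T := by simp [sSet, vz]

lemma adj_yx : (GG T y N).Adj (emb T y) (vx T) := by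
  rw [adjGG]; tauto

lemma adj_xw : (GG T y N).Adj (vx T) (vw T) := by
  rw [adjGG]; tauto

lemma adj_wv : (GG T y N).Adj (vw T) (vv T) := by
  rw [adjGG]; tauto

lemma adj_vz : (GG T y N).Adj (vv T) (vz T) := by
  rw [adjGG]; tauto

lemma adj_emb (a b : T.V) : (GG T y N).Adj (emb T a) (emb T b) ↔ T.G.Adj a b := by
  rw [adjGG]
  constructor
  · intro h
    rcases h with ⟨a', b', hab, ha, hb⟩ | h | h | h | h | ⟨n, hn, h⟩ <;>
      simp_all [emb, vx, vw, vv, vz, vh]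
  · intro h; exact Or.inl ⟨a, b, h, rfl, rfl⟩

lemma adj_h_emb (n : T.V) (hn : n ∈ N) : (GG T y N).Adj (vh T) (emb T n) := by
  rw [adjGG]
  exact Or.inr <| Or.inr <| Or.inr <| Or.inr <| Or.inr ⟨n, hn, Or.inr ⟨rfl, rfl⟩⟩

lemma nbhd_z : (GG T y N).neighborSet (vz T) = {vv T} := by
  ext q
  rw [SimpleGraph.mem_neighborSet, adjGG]
  simp only [Set.mem_singleton_iff, emb, vx, vw, vv, vz, vh]
  aesop

lemma nbhd_v : (GG T y N).neighborSet (vv T) = {vw T, vz T} := by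
  ext q
  rw [SimpleGraph.mem_neighborSet, adjGG]
  simp only [Set.mem_insert_iff, Set.mem_singleton_iff, emb, vx, vw, vv, vz, vh]
  aesop

lemma nbhd_emb_subset (a : T.V) (ha : a ≠ y) :
    (GG T y N).neighborSet (emb T a) ⊆ sSet T := by
  intro q hq
  rw [SimpleGraph.mem_neighborSet, adjGG] at hq
  rcases hq with ⟨a', b', hab, h1, h2⟩ | (⟨h1, h2⟩ | ⟨h1, h2⟩) | (⟨h1, h2⟩ | ⟨h1, h2⟩) |
    (⟨h1, h2⟩ | ⟨h1, h2⟩) | (⟨h1, h2⟩ | ⟨h1, h2⟩) | ⟨n, hn, ⟨h1, h2⟩ | ⟨h1, h2⟩⟩ <;>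
    first
      | (subst h2; first | exact emb_mem_sSet T _ | exact vh_mem_sSet T)
      | (subst h1; first | exact emb_mem_sSet T _ | exact vh_mem_sSet T)
      | (exfalso; simp_all [emb, vx, vw, vv, vz, vh])

lemma nbhd_y_subset :
    (GG T y N).neighborSet (emb T y) ⊆ insert (vx T) (sSet T) := by
  intro q hq
  rw [SimpleGraph.mem_neighborSet, adjGG] at hq
  rcases hq with ⟨a', b', hab, h1, h2⟩ | (⟨h1, h2⟩ | ⟨h1, h2⟩) | (⟨h1, h2⟩ | ⟨h1, h2⟩) |
    (⟨h1, h2⟩ | ⟨h1, h2⟩) | (⟨h1, h2⟩ | ⟨h1, h2⟩) | ⟨n, hn, ⟨h1, h2⟩ | ⟨h1, h2⟩⟩ <;>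
    first
      | (subst h2; first
          | exact Set.mem_insert _ _
          | exact Set.mem_insert_of_mem _ (emb_mem_sSet T _)
          | exact Set.mem_insert_of_mem _ (vh_mem_sSet T))
      | (subst h1; first
          | exact Set.mem_insert _ _
          | exact Set.mem_insert_of_mem _ (emb_mem_sSet T _)
          | exact Set.mem_insert_of_mem _ (vh_mem_sSet T))
      | (exfalso; simp_all [emb, vx, vw, vv, vz, vh])

lemma nbhd_h_subset : (GG T y N).neighborSet (vh T) ⊆ sSet T := by
  intro q hq
  rw [SimpleGraph.mem_neighborSet, adjGG] at hq
  rcases hq with ⟨a', b', hab, h1, h2⟩ | (⟨h1, h2⟩ | ⟨h1, h2⟩) | (⟨h1, h2⟩ | ⟨h1, h2⟩) |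
    (⟨h1, h2⟩ | ⟨h1, h2⟩) | (⟨h1, h2⟩ | ⟨h1, h2⟩) | ⟨n, hn, ⟨h1, h2⟩ | ⟨h1, h2⟩⟩ <;>
    first
      | (subst h2; first | exact emb_mem_sSet T _ | exact vh_mem_sSet T)
      | (subst h1; first | exact emb_mem_sSet T _ | exact vh_mem_sSet T)
      | (exfalso; simp_all [emb, vx, vw, vv, vz, vh])

/-- Degree in an induced subgraph, as a set intersection. -/
lemma deg_induce {VV : Type} (H : SimpleGraph VV) (s : Set VV) (u : ↥s) :
    ((H.induce s).neighborSet u).ncard = (H.neighborSet ↑u ∩ s).ncard := by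
  rw [← Set.ncard_image_of_injective _ (Subtype.val_injective (p := fun x => x ∈ s))]
  congr 1
  ext q
  constructor
  · rintro ⟨b, hb, rfl⟩
    exact ⟨hb, b.2⟩
  · rintro ⟨hq, hqs⟩
    exact ⟨⟨q, hqs⟩, hq, rfl⟩

lemma induce_edge_sub {VV : Type} (H : SimpleGraph VV) (s : Set VV) :
    Sym2.map (Subtype.val) '' (H.induce s).edgeSet ⊆ H.edgeSet := by
  rintro e ⟨e', he', rfl⟩
  induction e' using Sym2.ind with
  | _ a b =>
    rw [SimpleGraph.mem_edgeSet] at he'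
    have he'' : H.Adj a.1 b.1 := he'
    simpa only [Sym2.map_pair_eq, SimpleGraph.mem_edgeSet] using he''

lemma nbhd_subset_of_ne (u : Wt T) (hu : u ∈ sSet T) (hne : u ≠ emb T y) :
    (GG T y N).neighborSet u ⊆ sSet T := by
  rcases u with (a | i) | ⟨⟩
  · refine nbhd_emb_subset T y N a ?_
    intro h; exact hne (by rw [h]; rfl)
  · exfalso; fin_cases i <;> simp [sSet] at hu
  · exact nbhd_h_subset T y N

lemma deg_le_ne [Finite T.V] (u : ↥(sSet T)) (hne : (u : Wt T) ≠ emb T y) :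
    ((GG T y N).neighborSet ↑u).ncard ≤
      (((GG T y N).induce (sSet T)).neighborSet u).ncard := by
  rw [deg_induce, Set.inter_eq_self_of_subset_left (nbhd_subset_of_ne T y N u.1 u.2 hne)]

lemma deg_le_y [Finite T.V] :
    ((GG T y N).neighborSet (emb T y)).ncard ≤
      (((GG T y N).induce (sSet T)).neighborSet ⟨emb T y, emb_mem_sSet T y⟩).ncard + 1 := by
  rw [deg_induce]
  have hsub : (GG T y N).neighborSet (emb T y) ⊆
      insert (vx T) ((GG T y N).neighborSet (emb T y) ∩ sSet T) := by
    intro q hq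
    rcases Set.mem_insert_iff.mp (nbhd_y_subset T y N hq) with h | h
    · exact Set.mem_insert_iff.mpr (Or.inl h)
    · exact Set.mem_insert_iff.mpr (Or.inr ⟨hq, h⟩)
  calc ((GG T y N).neighborSet (emb T y)).ncard
      ≤ (insert (vx T) ((GG T y N).neighborSet (emb T y) ∩ sSet T)).ncard :=
        Set.ncard_le_ncard hsub (Set.toFinite _)
    _ ≤ ((GG T y N).neighborSet (emb T y) ∩ sSet T).ncard + 1 := Set.ncard_insert_le _ _

lemma edge_count [Finite T.V] :
    ((GG T y N).induce (sSet T)).edgeSet.ncard + 4 ≤ (GG T y N).edgeSet.ncard := by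
  set I : Set (Sym2 (Wt T)) :=
    Sym2.map (Subtype.val) '' ((GG T y N).induce (sSet T)).edgeSet with hI
  set E4 : Set (Sym2 (Wt T)) :=
    {s(emb T y, vx T), s(vx T, vw T), s(vw T, vv T), s(vv T, vz T)} with hE4
  have hIsub : I ⊆ (GG T y N).edgeSet := induce_edge_sub _ _
  have hE4sub : E4 ⊆ (GG T y N).edgeSet := by
    intro e he
    rcases he with rfl | rfl | rfl | rfl
    · exact (adj_yx T y N)
    · exact (adj_xw T y N)
    · exact (adj_wv T y N)
    · exact (adj_vz T y N)
  have hmem : ∀ e ∈ I, ∀ u ∈ e, u ∈ sSet T := by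
    rintro e ⟨e', he', rfl⟩
    induction e' using Sym2.ind with
    | _ a b =>
      intro u hu
      rw [Sym2.map_pair_eq, Sym2.mem_iff] at hu
      rcases hu with rfl | rfl
      exacts [a.2, b.2]
  have hdisj : Disjoint I E4 := by
    rw [Set.disjoint_left]
    intro e heI heE
    rcases heE with rfl | rfl | rfl | rfl
    · exact vx_not_mem_sSet T (hmem _ heI _ (Sym2.mem_iff.mpr (Or.inr rfl)))
    · exact vx_not_mem_sSet T (hmem _ heI _ (Sym2.mem_iff.mpr (Or.inl rfl)))
    · exact vw_not_mem_sSet T (hmem _ heI _ (Sym2.mem_iff.mpr (Or.inl rfl)))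
    · exact vv_not_mem_sSet T (hmem _ heI _ (Sym2.mem_iff.mpr (Or.inl rfl)))
  have hE4card : E4.ncard = 4 := by
    rw [hE4, Set.ncard_insert_of_notMem (by simp [Sym2.eq_iff, emb, vx, vw, vv, vz]),
      Set.ncard_insert_of_notMem (by simp [Sym2.eq_iff, emb, vx, vw, vv, vz]),
      Set.ncard_insert_of_notMem (by simp [Sym2.eq_iff, emb, vx, vw, vv, vz]),
      Set.ncard_singleton]
  have hIcard : I.ncard = ((GG T y N).induce (sSet T)).edgeSet.ncard :=
    Set.ncard_image_of_injective _ (Sym2.map.injective Subtype.val_injective)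
  calc ((GG T y N).induce (sSet T)).edgeSet.ncard + 4 = I.ncard + E4.ncard := by
        rw [hIcard, hE4card]
    _ = (I ∪ E4).ncard := (Set.ncard_union_eq hdisj).symm
    _ ≤ (GG T y N).edgeSet.ncard :=
        Set.ncard_le_ncard (Set.union_subset hIsub hE4sub) (Set.toFinite _)

end Aux

theorem stmt_1 (T : LGraph) (y : T.V)
    (hT : InGamma T) (hy : T.sta y = Status.C) (hleaf : (T.G.neighborSet y).ncard = 1)
    (N : Finset T.V) (htN : 2 ≤ N.card)
    (G : SimpleGraph ((T.V ⊕ Fin 4) ⊕ Unit))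
    (hG : G = attachVertex (o1Ext T y).G (Sum.inl '' (N : Set T.V)))
    (h' :
      totalDominationNumber (G.induce
        {u | u ∉ ({Sum.inl (Sum.inr 0), Sum.inl (Sum.inr 1), Sum.inl (Sum.inr 2),
          Sum.inl (Sum.inr 3)} : Set ((T.V ⊕ Fin 4) ⊕ Unit))}) ≤
      annihilationNumber (G.induce
        {u | u ∉ ({Sum.inl (Sum.inr 0), Sum.inl (Sum.inr 1), Sum.inl (Sum.inr 2),
          Sum.inl (Sum.inr 3)} : Set ((T.V ⊕ Fin 4) ⊕ Unit))}) + 1) :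
    totalDominationNumber G ≤ annihilationNumber G + 1 := by
  classical
  haveI hfinT : Finite T.V := hT.finiteV
  haveI : Fintype (Wt T) := Fintype.ofFinite _
  haveI : Fintype (↥(sSet T)) := Fintype.ofFinite _
  have hEq : G = GG T y N := hG
  subst hEq
  by_cases hiso : ∀ p : Wt T, ∃ q, (GG T y N).Adj p q
  · -- main case
    have h'' : totalDominationNumber ((GG T y N).induce (sSet T)) ≤
        annihilationNumber ((GG T y N).induce (sSet T)) + 1 := h'
    -- G' has no isolated vertices, so a total dominating set of G' exists
    have hGnoiso : ∀ u : ↥(sSet T), ∃ d : ↥(sSet T),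
        ((GG T y N).induce (sSet T)).Adj u d := by
      rintro ⟨p, hp⟩
      rcases p with (a | i) | ⟨⟩
      · by_cases hay : a = y
        · have hyn : (T.G.neighborSet y).Nonempty :=
            Set.nonempty_of_ncard_ne_zero (by rw [hleaf]; omega)
          obtain ⟨b, hb⟩ := hyn
          refine ⟨⟨emb T b, emb_mem_sSet T b⟩, ?_⟩
          exact (adj_emb T y N a b).mpr (by rw [hay]; exact hb)
        · obtain ⟨q, hq⟩ := hiso (Sum.inl (Sum.inl a))
          have hqs : q ∈ sSet T := nbhd_emb_subset T y N a hay hq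
          exact ⟨⟨q, hqs⟩, hq⟩
      · exfalso; fin_cases i <;> simp [sSet] at hp
      · have hN0 : 0 < N.card := by omega
        obtain ⟨n, hn⟩ := Finset.card_pos.mp hN0
        exact ⟨⟨emb T n, emb_mem_sSet T n⟩, adj_h_emb T y N n hn⟩
    have hne' : {k | ∃ D : Finset ↥(sSet T),
        (∀ v, ∃ u ∈ D, ((GG T y N).induce (sSet T)).Adj v u) ∧ D.card = k}.Nonempty := by
      refine ⟨(Finset.univ : Finset ↥(sSet T)).card, Finset.univ, fun u => ?_, rfl⟩
      obtain ⟨d, hd⟩ := hGnoiso u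
      exact ⟨d, Finset.mem_univ d, hd⟩
    obtain ⟨D', hD'tds, hD'card⟩ := Nat.sInf_mem hne'
    have hD'card' : D'.card = totalDominationNumber ((GG T y N).induce (sSet T)) := hD'card
    -- build a total dominating set of G
    set D : Finset (Wt T) :=
      D'.image (fun d : ↥(sSet T) => (d : Wt T)) ∪ {vw T, vv T} with hD
    have hDtds : ∀ p : Wt T, ∃ u ∈ D, (GG T y N).Adj p u := by
      intro p
      by_cases hp : p ∈ sSet T
      · obtain ⟨d, hd, hadj⟩ := hD'tds ⟨p, hp⟩
        exact ⟨(d : Wt T),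
          Finset.mem_union_left _ (Finset.mem_image_of_mem _ hd), hadj⟩
      · rcases p with (a | i) | ⟨⟩
        · exact absurd (emb_mem_sSet T a) hp
        · have hvw : vw T ∈ D := Finset.mem_union_right _ (by simp)
          have hvv : vv T ∈ D := Finset.mem_union_right _ (by simp)
          fin_cases i
          · exact ⟨vw T, hvw, adj_xw T y N⟩
          · exact ⟨vv T, hvv, adj_wv T y N⟩
          · exact ⟨vw T, hvw, (adj_wv T y N).symm⟩
          · exact ⟨vv T, hvv, (adj_vz T y N).symm⟩
        · exact absurd (vh_mem_sSet T) hp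
    have h1 : totalDominationNumber (GG T y N) ≤ D.card :=
      Nat.sInf_le ⟨D, hDtds, rfl⟩
    have h2 : D.card ≤ D'.card + 2 := by
      refine (Finset.card_union_le _ _).trans ?_
      have hi := Finset.card_image_le (f := fun d : ↥(sSet T) => (d : Wt T)) (s := D')
      have h3 : ({vw T, vv T} : Finset (Wt T)).card ≤ 2 :=
        (Finset.card_insert_le _ _).trans (by simp)
      omega
    -- annihilation side
    have hAne : {k | ∃ S : Finset ↥(sSet T), S.card = k ∧
        ∑ v ∈ S, (((GG T y N).induce (sSet T)).neighborSet v).ncard ≤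
          ((GG T y N).induce (sSet T)).edgeSet.ncard}.Nonempty :=
      ⟨0, ∅, rfl, by simp⟩
    have hAbdd : BddAbove {k | ∃ S : Finset ↥(sSet T), S.card = k ∧
        ∑ v ∈ S, (((GG T y N).induce (sSet T)).neighborSet v).ncard ≤
          ((GG T y N).induce (sSet T)).edgeSet.ncard} := by
      refine ⟨Fintype.card ↥(sSet T), ?_⟩
      rintro k ⟨S, rfl, -⟩
      exact Finset.card_le_univ S
    obtain ⟨S', hS'card, hS'sum⟩ := Nat.sSup_mem hAne hAbdd
    have hS'card' : S'.card = annihilationNumber ((GG T y N).induce (sSet T)) := hS'card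
    set S : Finset (Wt T) :=
      S'.image (fun d : ↥(sSet T) => (d : Wt T)) ∪ {vv T, vz T} with hS
    have hdisjS : Disjoint (S'.image (fun d : ↥(sSet T) => (d : Wt T)))
        ({vv T, vz T} : Finset (Wt T)) := by
      rw [Finset.disjoint_left]
      rintro a ha hmem
      obtain ⟨d, -, rfl⟩ := Finset.mem_image.mp ha
      rcases Finset.mem_insert.mp hmem with h | h
      · exact vv_not_mem_sSet T (h ▸ d.2)
      · exact vz_not_mem_sSet T ((Finset.mem_singleton.mp h) ▸ d.2)
    have hvvvz : vv T ∉ ({vz T} : Finset (Wt T)) := by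
      simp [vv, vz]
    have hcardS : S.card = S'.card + 2 := by
      rw [hS, Finset.card_union_of_disjoint hdisjS,
        Finset.card_image_of_injective _ Subtype.val_injective,
        Finset.card_insert_of_notMem hvvvz, Finset.card_singleton]
    have hsumS : ∑ u ∈ S, ((GG T y N).neighborSet u).ncard ≤
        (GG T y N).edgeSet.ncard := by
      rw [hS, Finset.sum_union hdisjS]
      have hz : ((GG T y N).neighborSet (vz T)).ncard = 1 := by
        rw [nbhd_z]; exact Set.ncard_singleton _
      have hv : ((GG T y N).neighborSet (vv T)).ncard = 2 := by
        rw [nbhd_v, Set.ncard_insert_of_notMem (by simp [vw, vz]),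
          Set.ncard_singleton]
      have hpair : ∑ u ∈ ({vv T, vz T} : Finset (Wt T)),
          ((GG T y N).neighborSet u).ncard = 3 := by
        rw [Finset.sum_insert hvvvz, Finset.sum_singleton, hv, hz]
      have himg : ∑ u ∈ S'.image (fun d : ↥(sSet T) => (d : Wt T)),
          ((GG T y N).neighborSet u).ncard
          = ∑ d ∈ S', ((GG T y N).neighborSet ↑d).ncard :=
        Finset.sum_image (by intro a _ b _ h; exact Subtype.val_injective h)
      have hptwise : ∀ d ∈ S', ((GG T y N).neighborSet ↑d).ncard ≤
          (((GG T y N).induce (sSet T)).neighborSet d).ncard +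
            (if (d : Wt T) = emb T y then 1 else 0) := by
        intro d _
        by_cases hd : (d : Wt T) = emb T y
        · rw [if_pos hd]
          have h0 : d = ⟨emb T y, emb_mem_sSet T y⟩ := Subtype.ext hd
          rw [h0]
          exact deg_le_y T y N
        · rw [if_neg hd]
          exact Nat.le_add_right _ 0 |>.trans
            (by rw [Nat.add_zero]; exact deg_le_ne T y N d hd)
      have hind : (∑ d ∈ S', (if (d : Wt T) = emb T y then 1 else 0)) ≤ 1 := by
        rw [← Finset.card_filter]
        refine Finset.card_le_one.mpr ?_
        intro a ha b hb
        simp only [Finset.mem_filter] at ha hb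
        exact Subtype.val_injective (ha.2.trans hb.2.symm)
      have hsum1 : ∑ d ∈ S', ((GG T y N).neighborSet ↑d).ncard ≤
          (∑ d ∈ S', (((GG T y N).induce (sSet T)).neighborSet d).ncard) + 1 := by
        calc ∑ d ∈ S', ((GG T y N).neighborSet ↑d).ncard
            ≤ ∑ d ∈ S', ((((GG T y N).induce (sSet T)).neighborSet d).ncard +
                (if (d : Wt T) = emb T y then 1 else 0)) := Finset.sum_le_sum hptwise
          _ = (∑ d ∈ S', (((GG T y N).induce (sSet T)).neighborSet d).ncard) +
                ∑ d ∈ S', (if (d : Wt T) = emb T y then 1 else 0) :=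
              Finset.sum_add_distrib
          _ ≤ _ + 1 := by omega
      have hec := edge_count T y N
      rw [himg, hpair]
      omega
    have hAbdd2 : BddAbove {k | ∃ S : Finset (Wt T), S.card = k ∧
        ∑ v ∈ S, ((GG T y N).neighborSet v).ncard ≤ (GG T y N).edgeSet.ncard} := by
      refine ⟨Fintype.card (Wt T), ?_⟩
      rintro k ⟨S, rfl, -⟩
      exact Finset.card_le_univ S
    have h3 : annihilationNumber ((GG T y N).induce (sSet T)) + 2 ≤
        annihilationNumber (GG T y N) := by
      refine le_csSup hAbdd2 ?_
      exact ⟨S, by omega, hsumS⟩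
    omega
  · -- G has an isolated vertex: no total dominating set exists
    push_neg at hiso
    obtain ⟨p0, hp0⟩ := hiso
    have hM : {k | ∃ D : Finset (Wt T),
        (∀ p, ∃ u ∈ D, (GG T y N).Adj p u) ∧ D.card = k} = ∅ := by
      ext k
      simp only [Set.mem_setOf_eq, Set.mem_empty_iff_false, iff_false]
      rintro ⟨D, hDt, -⟩
      obtain ⟨u, -, hu⟩ := hDt p0
      exact hp0 u hu
    have : totalDominationNumber (GG T y N) = 0 := by
      rw [totalDominationNumber, hM, Nat.sInf_empty]
    omega
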